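/- Let φ1, φ2, X1, X2 be positive reals and β ∈ (0,1]. Define F(τ) = φ2·(1 − 1/(2·(X2 + β·τ))) + √( φ1·φ2·(X1 − τ)/(X2 + β·τ) ) on (−X2/β, X1). Then for every τ ∈ [0, X1), the derivative of F at τ is strictly positive if and only if X1 + X2/β < √( φ2·(X1 − τ)/(φ1·(X2 + β·τ)) ). -/

import Mathlib

noncomputable section

/-- In Case 2 with a positive transfer, the alliance payoff has strictly
positive derivative at `τ ∈ [0, X1)` iff
`X1 + X2/β < √(φ2(X1−τ)/(φ1(X2+βτ)))`. -/
theorem case2_alliance_deriv_pos_iff (φ1 φ2 X1 X2 β : ℝ)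
    (hφ1 : 0 < φ1) (hφ2 : 0 < φ2) (hX1 : 0 < X1) (hX2 : 0 < X2)
    (hβ0 : 0 < β) (hβ1 : β ≤ 1) :
    ∀ τ ∈ Set.Ico (0 : ℝ) X1,
      (0 < deriv (fun τ : ℝ => φ2 * (1 - 1 / (2 * (X2 + β * τ))) +
          Real.sqrt (φ1 * φ2 * (X1 - τ) / (X2 + β * τ))) τ ↔
        X1 + X2 / β < Real.sqrt (φ2 * (X1 - τ) / (φ1 * (X2 + β * τ)))) := by
  rintro τ ⟨hτ0, hτ1⟩
  have hD : 0 < X2 + β * τ := by positivity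
  have hN : 0 < X1 - τ := by linarith
  have hgpos : 0 < φ1 * φ2 * (X1 - τ) / (X2 + β * τ) := by positivity
  set s : ℝ := Real.sqrt (φ1 * φ2 * (X1 - τ) / (X2 + β * τ)) with hs
  have hspos : 0 < s := Real.sqrt_pos.mpr hgpos
  have hs2 : s ^ 2 = φ1 * φ2 * (X1 - τ) / (X2 + β * τ) := Real.sq_sqrt hgpos.le
  have hden : HasDerivAt (fun t : ℝ => X2 + β * t) (β * 1) τ :=
    ((hasDerivAt_id τ).const_mul β).const_add X2
  have hden2 : HasDerivAt (fun t : ℝ => 2 * (X2 + β * t)) (2 * (β * 1)) τ :=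
    hden.const_mul 2
  have hnum : HasDerivAt (fun t : ℝ => φ1 * φ2 * (X1 - t)) (φ1 * φ2 * (0 - 1)) τ :=
    ((hasDerivAt_const τ X1).sub (hasDerivAt_id τ)).const_mul (φ1 * φ2)
  have hg : HasDerivAt (fun t : ℝ => φ1 * φ2 * (X1 - t) / (X2 + β * t))
      ((φ1 * φ2 * (0 - 1) * (X2 + β * τ) - φ1 * φ2 * (X1 - τ) * (β * 1)) /
        (X2 + β * τ) ^ 2) τ :=
    hnum.div hden hD.ne'
  have hsqrt : HasDerivAt (fun t : ℝ => Real.sqrt (φ1 * φ2 * (X1 - t) / (X2 + β * t)))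
      ((φ1 * φ2 * (0 - 1) * (X2 + β * τ) - φ1 * φ2 * (X1 - τ) * (β * 1)) /
        (X2 + β * τ) ^ 2 / (2 * s)) τ :=
    hg.sqrt hgpos.ne'
  have h2D : (2 * (X2 + β * τ)) ≠ 0 := by positivity
  have hf1 : HasDerivAt (fun t : ℝ => φ2 * (1 - 1 / (2 * (X2 + β * t))))
      (φ2 * -((0 * (2 * (X2 + β * τ)) - 1 * (2 * (β * 1))) / (2 * (X2 + β * τ)) ^ 2)) τ :=
    (((hasDerivAt_const τ (1 : ℝ)).div hden2 h2D).const_sub 1).const_mul φ2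
  have hF : HasDerivAt (fun t : ℝ => φ2 * (1 - 1 / (2 * (X2 + β * t))) +
      Real.sqrt (φ1 * φ2 * (X1 - t) / (X2 + β * t))) _ τ := hf1.add hsqrt
  rw [hF.deriv]
  -- rewrite RHS sqrt as s / φ1
  have hrhs : Real.sqrt (φ2 * (X1 - τ) / (φ1 * (X2 + β * τ))) = s / φ1 := by
    have h1 : φ2 * (X1 - τ) / (φ1 * (X2 + β * τ)) = (s / φ1) ^ 2 := by
      rw [div_pow, hs2]; field_simp
    rw [h1, Real.sqrt_sq (by positivity)]
  rw [hrhs, lt_div_iff₀ hφ1]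
  -- factor the derivative
  have hE : φ2 * -((0 * (2 * (X2 + β * τ)) - 1 * (2 * (β * 1))) / (2 * (X2 + β * τ)) ^ 2) +
      (φ1 * φ2 * (0 - 1) * (X2 + β * τ) - φ1 * φ2 * (X1 - τ) * (β * 1)) /
        (X2 + β * τ) ^ 2 / (2 * s) =
      φ2 * β / (2 * (X2 + β * τ) ^ 2 * s) * (s - (X1 + X2 / β) * φ1) := by
    field_simp
    ring
  rw [hE]
  have hc : 0 < φ2 * β / (2 * (X2 + β * τ) ^ 2 * s) := by positivity
  rw [mul_pos_iff_of_pos_left hc, sub_pos]
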